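/- Single-step dissociation of a positive DNF cannot decrease its probability: if φ = (x1 ∧ D1) ∨ (x1 ∧ D2) ∨ D3 and φ' = (x1 ∧ D1) ∨ (x1' ∧ D2) ∨ D3, where D1, D2, D3 are positive Boolean formulas over variables x2,...,xn and x1' is an independent copy of x1, then P[φ'] ≥ P[φ]. -/
import Mathlib


open MeasureTheory ProbabilityTheory MeasurableSpace

/-- Single-step dissociation of a positive DNF cannot decrease its probability:
for `φ = (x1 ∧ D1) ∨ (x1 ∧ D2) ∨ D3` and `φ' = (x1 ∧ D1) ∨ (x1' ∧ D2) ∨ D3`, where `x1'`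
(event `A'`) is an independent copy of `x1` (event `A`) and `D1, D2, D3` are events
independent of both, `P[φ'] ≥ P[φ]`. -/
theorem single_step_dissociation_upper_bound
    {Ω : Type*} [MeasurableSpace Ω] (μ : Measure Ω) [IsProbabilityMeasure μ]
    (A A' D1 D2 D3 : Set Ω)
    (hA : MeasurableSet A) (hA' : MeasurableSet A')
    (hD1 : MeasurableSet D1) (hD2 : MeasurableSet D2) (hD3 : MeasurableSet D3)
    (p1 : ℝ) (hp : (μ A).toReal = p1) (hp' : (μ A').toReal = p1)
    (hIndep : iIndep
      (fun i : Fin 3 =>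
        if i = 0 then generateFrom {A}
        else if i = 1 then generateFrom {A'}
        else generateFrom {D1, D2, D3}) μ) :
    (μ ((A ∩ D1) ∪ (A ∩ D2) ∪ D3)).toReal ≤
      (μ ((A ∩ D1) ∪ (A' ∩ D2) ∪ D3)).toReal := by
  classical
  have hmD1 : MeasurableSet[generateFrom {D1, D2, D3}] D1 := measurableSet_generateFrom (by simp)
  have hmD2 : MeasurableSet[generateFrom {D1, D2, D3}] D2 := measurableSet_generateFrom (by simp)
  have hmD3 : MeasurableSet[generateFrom {D1, D2, D3}] D3 := measurableSet_generateFrom (by simp)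
  set B1 : Set Ω := D1 \ D3 with hB1def
  set B2 : Set Ω := D2 \ D3 with hB2def
  set B12 : Set Ω := (D1 ∩ D2) \ D3 with hB12def
  have hmB1 : MeasurableSet[generateFrom {D1, D2, D3}] B1 := hmD1.diff hmD3
  have hmB2 : MeasurableSet[generateFrom {D1, D2, D3}] B2 := hmD2.diff hmD3
  have hmB12 : MeasurableSet[generateFrom {D1, D2, D3}] B12 := (hmD1.inter hmD2).diff hmD3
  -- m2-measurable sets are measurable
  have hle : ∀ s : Set Ω, MeasurableSet[generateFrom {D1, D2, D3}] s → MeasurableSet s := by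
    have h : generateFrom {D1, D2, D3} ≤ (inferInstance : MeasurableSpace Ω) := by
      apply generateFrom_le
      intro t ht
      simp only [Set.mem_insert_iff, Set.mem_singleton_iff] at ht
      rcases ht with rfl | rfl | rfl <;> assumption
    exact fun s hs => h s hs
  have hB1m : MeasurableSet B1 := hle _ hmB1
  have hB2m : MeasurableSet B2 := hle _ hmB2
  have hB12m : MeasurableSet B12 := hle _ hmB12
  -- independence facts
  have hAm2 : ∀ B : Set Ω, MeasurableSet[generateFrom {D1, D2, D3}] B → μ (A ∩ B) = μ A * μ B := by
    intro B hB
    have := hIndep.meas_biInter (S := {0, 2})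
      (s := fun i : Fin 3 => if i = 0 then A else B) ?_
    · simpa using this
    · intro i hi
      fin_cases hi
      · simpa using measurableSet_generateFrom (show A ∈ {A} by simp)
      · simpa using hB
  have hA'm2 : ∀ B : Set Ω, MeasurableSet[generateFrom {D1, D2, D3}] B → μ (A' ∩ B) = μ A' * μ B := by
    intro B hB
    have := hIndep.meas_biInter (S := {1, 2})
      (s := fun i : Fin 3 => if i = 1 then A' else B) ?_
    · simpa using this
    · intro i hi
      fin_cases hi
      · simpa using measurableSet_generateFrom (show A' ∈ {A'} by simp)
      · simpa using hB
  have hAA'm2 : ∀ B : Set Ω, MeasurableSet[generateFrom {D1, D2, D3}] B →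
      μ (A ∩ A' ∩ B) = μ A * μ A' * μ B := by
    intro B hB
    have := hIndep.meas_iInter
      (s := fun i : Fin 3 => if i = 0 then A else if i = 1 then A' else B) ?_
    · have hset : (⋂ i : Fin 3, (if i = 0 then A else if i = 1 then A' else B)) =
          A ∩ A' ∩ B := by
        ext x
        simp [Fin.forall_fin_succ, Set.mem_inter_iff, and_assoc]
      rw [hset] at this
      rw [this, Fin.prod_univ_three]
      norm_num [show (2:Fin 3) ≠ 0 by decide, show (2:Fin 3) ≠ 1 by decide,
        show (1:Fin 3) ≠ 0 by decide]
    · intro i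
      fin_cases i
      · simpa using measurableSet_generateFrom (show A ∈ {A} by simp)
      · simpa using measurableSet_generateFrom (show A' ∈ {A'} by simp)
      · simpa using hB
  -- rewrite both events as disjoint unions with D3
  have hU : (A ∩ D1) ∪ (A ∩ D2) ∪ D3 = ((A ∩ B1) ∪ (A ∩ B2)) ∪ D3 := by
    ext x
    simp only [Set.mem_union, Set.mem_inter_iff, Set.mem_diff, hB1def, hB2def]
    tauto
  have hV : (A ∩ D1) ∪ (A' ∩ D2) ∪ D3 = ((A ∩ B1) ∪ (A' ∩ B2)) ∪ D3 := by
    ext x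
    simp only [Set.mem_union, Set.mem_inter_iff, Set.mem_diff, hB1def, hB2def]
    tauto
  have hdisjU : Disjoint ((A ∩ B1) ∪ (A ∩ B2)) D3 := by
    rw [Set.disjoint_left]
    rintro x (⟨-, -, h⟩ | ⟨-, -, h⟩) hx <;> exact h hx
  have hdisjV : Disjoint ((A ∩ B1) ∪ (A' ∩ B2)) D3 := by
    rw [Set.disjoint_left]
    rintro x (⟨-, -, h⟩ | ⟨-, -, h⟩) hx <;> exact h hx
  have hUmeas : μ ((A ∩ D1) ∪ (A ∩ D2) ∪ D3)
      = μ ((A ∩ B1) ∪ (A ∩ B2)) + μ D3 := by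
    rw [hU, measure_union hdisjU hD3]
  have hVmeas : μ ((A ∩ D1) ∪ (A' ∩ D2) ∪ D3)
      = μ ((A ∩ B1) ∪ (A' ∩ B2)) + μ D3 := by
    rw [hV, measure_union hdisjV hD3]
  -- inclusion-exclusion
  have hIEU : μ ((A ∩ B1) ∪ (A ∩ B2)) + μ (A ∩ B12)
      = μ (A ∩ B1) + μ (A ∩ B2) := by
    have hint : (A ∩ B1) ∩ (A ∩ B2) = A ∩ B12 := by
      ext x
      simp only [Set.mem_inter_iff, Set.mem_diff, hB1def, hB2def, hB12def]
      tauto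
    rw [← hint]
    exact measure_union_add_inter _ (hA.inter hB2m)
  have hIEV : μ ((A ∩ B1) ∪ (A' ∩ B2)) + μ (A ∩ A' ∩ B12)
      = μ (A ∩ B1) + μ (A' ∩ B2) := by
    have hint : (A ∩ B1) ∩ (A' ∩ B2) = A ∩ A' ∩ B12 := by
      ext x
      simp only [Set.mem_inter_iff, Set.mem_diff, hB1def, hB2def, hB12def]
      tauto
    rw [← hint]
    exact measure_union_add_inter _ (hA'.inter hB2m)
  -- now pass to real numbers
  have fin : ∀ s : Set Ω, μ s ≠ ⊤ := fun s => measure_ne_top μ s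
  have toReal_add : ∀ s t : Set Ω, (μ s + μ t).toReal = (μ s).toReal + (μ t).toReal :=
    fun s t => ENNReal.toReal_add (fin s) (fin t)
  set p : ℝ := p1
  set b1 : ℝ := (μ B1).toReal
  set b2 : ℝ := (μ B2).toReal
  set b12 : ℝ := (μ B12).toReal
  set d3 : ℝ := (μ D3).toReal
  have hab1 : (μ (A ∩ B1)).toReal = p * b1 := by
    rw [hAm2 B1 hmB1, ENNReal.toReal_mul, hp]
  have hab2 : (μ (A ∩ B2)).toReal = p * b2 := by
    rw [hAm2 B2 hmB2, ENNReal.toReal_mul, hp]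
  have hab12 : (μ (A ∩ B12)).toReal = p * b12 := by
    rw [hAm2 B12 hmB12, ENNReal.toReal_mul, hp]
  have ha'b2 : (μ (A' ∩ B2)).toReal = p * b2 := by
    rw [hA'm2 B2 hmB2, ENNReal.toReal_mul, hp']
  have haa'b12 : (μ (A ∩ A' ∩ B12)).toReal = p * p * b12 := by
    rw [hAA'm2 B12 hmB12, ENNReal.toReal_mul, ENNReal.toReal_mul, hp, hp']
  have hUr : (μ ((A ∩ D1) ∪ (A ∩ D2) ∪ D3)).toReal + p * b12
      = p * b1 + p * b2 + d3 := by
    have h1 := congrArg ENNReal.toReal hUmeas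
    rw [toReal_add] at h1
    have h2 := congrArg ENNReal.toReal hIEU
    rw [toReal_add, toReal_add, hab1, hab2, hab12] at h2
    rw [h1]; linarith
  have hVr : (μ ((A ∩ D1) ∪ (A' ∩ D2) ∪ D3)).toReal + p * p * b12
      = p * b1 + p * b2 + d3 := by
    have h1 := congrArg ENNReal.toReal hVmeas
    rw [toReal_add] at h1
    have h2 := congrArg ENNReal.toReal hIEV
    rw [toReal_add, toReal_add, hab1, ha'b2, haa'b12] at h2
    rw [h1]; linarith
  have hp0 : 0 ≤ p := hp ▸ ENNReal.toReal_nonneg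
  have hp1le : p ≤ 1 := by
    rw [← hp]
    exact ENNReal.toReal_le_of_le_ofReal zero_le_one (by simpa using prob_le_one)
  have hb12 : 0 ≤ b12 := ENNReal.toReal_nonneg
  have key : p * p * b12 ≤ p * b12 := by
    nlinarith [mul_nonneg (sub_nonneg.2 hp1le) (mul_nonneg hp0 hb12)]
  linarith
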